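/- Let H₀ be a self-adjoint (densely defined, possibly unbounded) operator in the complex separable Hilbert space H, J ∈ B(H) self-adjoint with J² = I_H, and K ∈ B₂(H) Hilbert–Schmidt; set V = K J K* and H = H₀ + V with dom(H) = dom(H₀). Then Φ(z) = J + K*(H₀ − z)⁻¹K, defined for z ∈ ℂ∖ℝ, is a Herglotz operator on ℂ₊ (analytic with Im(Φ(z)) ≥ 0 for Im z > 0), Φ(z) is boundedly invertible for all z ∈ ℂ∖ℝ, and Φ(z)⁻¹ = J − J K*(H − z)⁻¹K J. -/

import Mathlib

open Complex Filter MeasureTheory TopologicalSpace ContinuousLinearMap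
open scoped InnerProductSpace Topology

noncomputable section

namespace SpectralShift

variable {H : Type*} [NormedAddCommGroup H] [InnerProductSpace ℂ H] [CompleteSpace H]

/-- The imaginary part `(T - T*)/(2i)` of a bounded operator. -/
def imPart (T : H →L[ℂ] H) : H →L[ℂ] H :=
  ((2 * Complex.I)⁻¹ : ℂ) • (T - ContinuousLinearMap.adjoint T)

/-- An operator-valued Herglotz function: analytic on the open upper half-plane with
nonnegative imaginary part there. -/
def IsHerglotz (M : ℂ → H →L[ℂ] H) : Prop :=
  DifferentiableOn ℂ M {z : ℂ | 0 < z.im} ∧ ∀ z : ℂ, 0 < z.im → (imPart (M z)).IsPositive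

/-- The integrand `(T + iλ)⁻¹ - (1 + iλ)⁻¹ I` in the integral representation of `log T`. -/
def logIntegrand (T : H →L[ℂ] H) (t : ℝ) : H →L[ℂ] H :=
  Ring.inverse (T + ((t : ℂ) * Complex.I) • (1 : H →L[ℂ] H)) -
    (((1 : ℂ) + (t : ℂ) * Complex.I)⁻¹) • (1 : H →L[ℂ] H)

/-- `log T = -i ∫₀^∞ ((T + iλ)⁻¹ - (1 + iλ)⁻¹ I) dλ` as a norm-convergent improper
Riemann integral, for a dissipative boundedly invertible `T`. -/
def opLog (T : H →L[ℂ] H) : H →L[ℂ] H :=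
  limUnder atTop (fun R : ℝ => (-Complex.I) • ∫ t in (0:ℝ)..R, logIntegrand T t)

/-- The logarithm `log S = (log S*)*` of an operator `S` with `-S` dissipative. -/
def opLogAnti (T : H →L[ℂ] H) : H →L[ℂ] H :=
  ContinuousLinearMap.adjoint (opLog (ContinuousLinearMap.adjoint T))

/-- The logarithm of a Herglotz-type operator family on `ℂ ∖ ℝ`, using `log T` in the
upper half-plane and the convention `log S = (log S*)*` in the lower half-plane. -/
def logHerg (Φ : ℂ → H →L[ℂ] H) (z : ℂ) : H →L[ℂ] H :=
  if 0 < z.im then opLog (Φ z) else opLogAnti (Φ z)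

/-- The logarithm of an anti-Herglotz-type operator family on `ℂ ∖ ℝ` (nonpositive
imaginary part in the upper half-plane). -/
def logAntiHerg (Φ : ℂ → H →L[ℂ] H) (z : ℂ) : H →L[ℂ] H :=
  if 0 < z.im then opLogAnti (Φ z) else opLog (Φ z)

/-- Trace class: absolute summability of the diagonal in every Hilbert basis. -/
def IsTraceClass (T : H →L[ℂ] H) : Prop :=
  ∀ (w : Set H) (b : HilbertBasis w ℂ H), Summable fun i => ‖⟪(b i : H), T (b i)⟫_ℂ‖

/-- The trace, computed in a fixed Hilbert basis (basis-independent for trace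
class operators). -/
def trH (T : H →L[ℂ] H) : ℂ :=
  ∑' i, ⟪((exists_hilbertBasis ℂ H).choose_spec.choose i : H),
    T ((exists_hilbertBasis ℂ H).choose_spec.choose i)⟫_ℂ

/-- The trace norm, via duality with bounded operators (the correct value for trace
class operators). -/
def traceNorm (T : H →L[ℂ] H) : ℝ :=
  ⨆ B : {B : H →L[ℂ] H // ‖B‖ ≤ 1}, ‖trH (T * (B : H →L[ℂ] H))‖

/-- Hilbert-Schmidt operators. -/
def IsHilbertSchmidt (K : H →L[ℂ] H) : Prop :=
  ∀ (w : Set H) (b : HilbertBasis w ℂ H), Summable fun i => ‖K (b i)‖ ^ 2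

/-- A (possibly unbounded) self-adjoint operator in `H`: a densely defined symmetric
operator possessing everywhere-defined bounded resolvents at every non-real point. -/
structure SelfAdjointOp (H : Type*) [NormedAddCommGroup H] [InnerProductSpace ℂ H]
    [CompleteSpace H] where
  dom : Submodule ℂ H
  dense_dom : Dense (dom : Set H)
  op : dom →ₗ[ℂ] H
  symmetric : ∀ x y : dom, ⟪op x, (y : H)⟫_ℂ = ⟪(x : H), op y⟫_ℂ
  resolvent : ℂ → H →L[ℂ] H
  resolvent_mem : ∀ {z : ℂ}, z.im ≠ 0 → ∀ x : H, resolvent z x ∈ dom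
  op_resolvent : ∀ {z : ℂ} (hz : z.im ≠ 0) (x : H),
    op ⟨resolvent z x, resolvent_mem hz x⟩ - z • resolvent z x = x
  resolvent_op : ∀ {z : ℂ} (hz : z.im ≠ 0) (x : dom),
    resolvent z (op x - z • (x : H)) = x

/-- `B = A + V` for a bounded operator `V` (with `dom B = dom A`). -/
def IsSumOf (B A : SelfAdjointOp H) (V : H →L[ℂ] H) : Prop :=
  B.dom = A.dom ∧ ∀ (x : H) (hxB : x ∈ B.dom) (hxA : x ∈ A.dom),
    B.op ⟨x, hxB⟩ = A.op ⟨x, hxA⟩ + V x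

/-- `R` is the (bounded, everywhere defined) resolvent `(A - z)⁻¹` of `A` at `z`. -/
def SelfAdjointOp.IsResolventAt (A : SelfAdjointOp H) (z : ℂ) (R : H →L[ℂ] H) : Prop :=
  (∀ x : H, R x ∈ A.dom) ∧
  (∀ (x : H) (hx : R x ∈ A.dom), A.op ⟨R x, hx⟩ - z • R x = x) ∧
  (∀ x : A.dom, R (A.op x - z • (x : H)) = x)

/-- `E` is the projection-valued spectral measure of the self-adjoint operator `A`. -/
def IsSpectralMeasure (A : SelfAdjointOp H) (E : Set ℝ → H →L[ℂ] H) : Prop :=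
  (∀ B : Set ℝ, MeasurableSet B → IsSelfAdjoint (E B)) ∧
  (∀ B C : Set ℝ, MeasurableSet B → MeasurableSet C → E B * E C = E (B ∩ C)) ∧
  (E Set.univ = 1) ∧
  (∀ (f : ℕ → Set ℝ), (∀ n, MeasurableSet (f n)) → Pairwise (Function.onFun Disjoint f) →
    ∀ x : H, HasSum (fun n => E (f n) x) (E (⋃ n, f n) x)) ∧
  ∃ μ : H → Measure ℝ,
    (∀ (f : H) (B : Set ℝ), MeasurableSet B → μ f B = ENNReal.ofReal (⟪f, E B f⟫_ℂ).re) ∧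
    ∀ (z : ℂ), z.im ≠ 0 → ∀ f : H,
      ⟪f, A.resolvent z f⟫_ℂ = ∫ l : ℝ, ((l : ℂ) - z)⁻¹ ∂(μ f)

/-- Invertibility of `T` restricted to the range of the orthogonal projection `P`
(for `T` commuting with `P`), with inverse `S` supported in `ran P`. -/
def InvertibleOn (T P : H →L[ℂ] H) : Prop :=
  ∃ S : H →L[ℂ] H, S * P = S ∧ P * S = S ∧ S * (T * P) = P ∧ (P * T) * S = P

/-- The spectral projection `J₊ = (I + J)/2` onto `H₊` for a self-adjoint unitary `J`. -/
def Jplus (J : H →L[ℂ] H) : H →L[ℂ] H := ((2 : ℂ)⁻¹) • (1 + J)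

/-- The spectral projection `J₋ = (I - J)/2` onto `H₋` for a self-adjoint unitary `J`. -/
def Jminus (J : H →L[ℂ] H) : H →L[ℂ] H := ((2 : ℂ)⁻¹) • (1 - J)

/-- `Φ₊(z) = I + J₊ K* (H₀ - z)⁻¹ K J₊`, the operator on `H` inducing `Φ₊(z)` on `H₊`
(and the identity on `H₋`). -/
def PhiPlus (H0 : SelfAdjointOp H) (J K : H →L[ℂ] H) (z : ℂ) : H →L[ℂ] H :=
  1 + Jplus J * (ContinuousLinearMap.adjoint K * H0.resolvent z * K) * Jplus J

/-- `Φ̃₋(z) = I - J₋ K* (H₊ - z)⁻¹ K J₋`, the operator on `H` inducing `Φ̃₋(z)` on `H₋`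
(and the identity on `H₊`). -/
def PhiMinusT (Hp : SelfAdjointOp H) (J K : H →L[ℂ] H) (z : ℂ) : H →L[ℂ] H :=
  1 - Jminus J * (ContinuousLinearMap.adjoint K * Hp.resolvent z * K) * Jminus J

lemma res_first (A : SelfAdjointOp H) {z w : ℂ} (hz : z.im ≠ 0) (hw : w.im ≠ 0) (x : H) :
    A.resolvent w x - A.resolvent z x = (w - z) • A.resolvent z (A.resolvent w x) := by
  have h1 := A.op_resolvent hw x
  have h3 : A.resolvent z (A.op ⟨A.resolvent w x, A.resolvent_mem hw x⟩
      - z • A.resolvent w x) = A.resolvent w x :=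
    A.resolvent_op hz ⟨A.resolvent w x, A.resolvent_mem hw x⟩
  have h2 : A.op ⟨A.resolvent w x, A.resolvent_mem hw x⟩ - z • A.resolvent w x
      = x + (w - z) • A.resolvent w x := by
    calc A.op ⟨A.resolvent w x, A.resolvent_mem hw x⟩ - z • A.resolvent w x
        = (A.op ⟨A.resolvent w x, A.resolvent_mem hw x⟩ - w • A.resolvent w x)
          + (w - z) • A.resolvent w x := by module
      _ = x + (w - z) • A.resolvent w x := by rw [h1]
  rw [h2, map_add, _root_.map_smul] at h3
  conv_lhs => rw [← h3]
  abel

lemma res_first_op (A : SelfAdjointOp H) {z w : ℂ} (hz : z.im ≠ 0) (hw : w.im ≠ 0) :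
    A.resolvent w - A.resolvent z = (w - z) • (A.resolvent z * A.resolvent w) := by
  ext x
  simpa [ContinuousLinearMap.mul_apply] using res_first A hz hw x

lemma res_adjoint (A : SelfAdjointOp H) {z : ℂ} (hz : z.im ≠ 0) :
    ContinuousLinearMap.adjoint (A.resolvent z) = A.resolvent ((starRingEnd ℂ) z) := by
  have hz' : ((starRingEnd ℂ) z).im ≠ 0 := by
    simpa using neg_ne_zero.mpr hz
  symm
  rw [ContinuousLinearMap.eq_adjoint_iff]
  intro x y
  have h1 := A.op_resolvent hz' x
  have h2 := A.op_resolvent hz y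
  have e1 : ⟪A.resolvent ((starRingEnd ℂ) z) x, y⟫_ℂ
      = ⟪A.op ⟨A.resolvent ((starRingEnd ℂ) z) x, A.resolvent_mem hz' x⟩,
          A.resolvent z y⟫_ℂ - z * ⟪A.resolvent ((starRingEnd ℂ) z) x, A.resolvent z y⟫_ℂ := by
    conv_lhs => rw [← h2]
    rw [inner_sub_right, inner_smul_right,
      ← A.symmetric ⟨A.resolvent ((starRingEnd ℂ) z) x, A.resolvent_mem hz' x⟩
        ⟨A.resolvent z y, A.resolvent_mem hz y⟩]
  have e2 : ⟪x, A.resolvent z y⟫_ℂ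
      = ⟪A.op ⟨A.resolvent ((starRingEnd ℂ) z) x, A.resolvent_mem hz' x⟩,
          A.resolvent z y⟫_ℂ - z * ⟪A.resolvent ((starRingEnd ℂ) z) x, A.resolvent z y⟫_ℂ := by
    conv_lhs => rw [← h1]
    rw [inner_sub_left, inner_smul_left]
    simp
  rw [e1, ← e2]

lemma res_second (H0 Hop : SelfAdjointOp H) {V : H →L[ℂ] H} (hsum : IsSumOf Hop H0 V)
    {z : ℂ} (hz : z.im ≠ 0) (x : H) :
    H0.resolvent z x = Hop.resolvent z x + H0.resolvent z (V (Hop.resolvent z x)) := by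
  obtain ⟨hdom, hop⟩ := hsum
  have huA : Hop.resolvent z x ∈ H0.dom := hdom ▸ Hop.resolvent_mem hz x
  have h1 := Hop.op_resolvent hz x
  have h2 := hop (Hop.resolvent z x) (Hop.resolvent_mem hz x) huA
  have h3 : H0.op ⟨Hop.resolvent z x, huA⟩ - z • Hop.resolvent z x
      = x - V (Hop.resolvent z x) := by
    calc H0.op ⟨Hop.resolvent z x, huA⟩ - z • Hop.resolvent z x
        = (H0.op ⟨Hop.resolvent z x, huA⟩ + V (Hop.resolvent z x)
            - z • Hop.resolvent z x) - V (Hop.resolvent z x) := by abel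
      _ = (Hop.op ⟨Hop.resolvent z x, Hop.resolvent_mem hz x⟩
            - z • Hop.resolvent z x) - V (Hop.resolvent z x) := by rw [h2]
      _ = x - V (Hop.resolvent z x) := by rw [h1]
  have h4 : H0.resolvent z (H0.op ⟨Hop.resolvent z x, huA⟩ - z • Hop.resolvent z x)
      = Hop.resolvent z x := H0.resolvent_op hz ⟨Hop.resolvent z x, huA⟩
  rw [h3, map_sub] at h4
  rw [sub_eq_iff_eq_add] at h4
  exact h4

lemma res_second' (H0 Hop : SelfAdjointOp H) {V : H →L[ℂ] H} (hsum : IsSumOf Hop H0 V)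
    {z : ℂ} (hz : z.im ≠ 0) (x : H) :
    H0.resolvent z x = Hop.resolvent z x + Hop.resolvent z (V (H0.resolvent z x)) := by
  obtain ⟨hdom, hop⟩ := hsum
  have huB : H0.resolvent z x ∈ Hop.dom := by rw [hdom]; exact H0.resolvent_mem hz x
  have h1 := H0.op_resolvent hz x
  have h2 := hop (H0.resolvent z x) huB (H0.resolvent_mem hz x)
  have h3 : Hop.op ⟨H0.resolvent z x, huB⟩ - z • H0.resolvent z x
      = x + V (H0.resolvent z x) := by
    calc Hop.op ⟨H0.resolvent z x, huB⟩ - z • H0.resolvent z x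
        = H0.op ⟨H0.resolvent z x, H0.resolvent_mem hz x⟩ + V (H0.resolvent z x)
            - z • H0.resolvent z x := by rw [h2]
      _ = (H0.op ⟨H0.resolvent z x, H0.resolvent_mem hz x⟩
            - z • H0.resolvent z x) + V (H0.resolvent z x) := by abel
      _ = x + V (H0.resolvent z x) := by rw [h1]
  have h4 : Hop.resolvent z (Hop.op ⟨H0.resolvent z x, huB⟩ - z • H0.resolvent z x)
      = H0.resolvent z x := Hop.resolvent_op hz ⟨H0.resolvent z x, huB⟩
  rw [h3, map_add] at h4
  exact h4.symm

lemma res_second_op (H0 Hop : SelfAdjointOp H) {V : H →L[ℂ] H} (hsum : IsSumOf Hop H0 V)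
    {z : ℂ} (hz : z.im ≠ 0) :
    H0.resolvent z - Hop.resolvent z = H0.resolvent z * V * Hop.resolvent z := by
  ext x
  simp only [ContinuousLinearMap.sub_apply, ContinuousLinearMap.mul_apply]
  exact sub_eq_iff_eq_add.mpr ((res_second H0 Hop hsum hz x).trans (add_comm _ _))

lemma res_second_op' (H0 Hop : SelfAdjointOp H) {V : H →L[ℂ] H} (hsum : IsSumOf Hop H0 V)
    {z : ℂ} (hz : z.im ≠ 0) :
    H0.resolvent z - Hop.resolvent z = Hop.resolvent z * V * H0.resolvent z := by
  ext x
  simp only [ContinuousLinearMap.sub_apply, ContinuousLinearMap.mul_apply]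
  exact sub_eq_iff_eq_add.mpr ((res_second' H0 Hop hsum hz x).trans (add_comm _ _))

lemma res_differentiableAt (A : SelfAdjointOp H) {z₀ : ℂ} (h : z₀.im ≠ 0) :
    DifferentiableAt ℂ A.resolvent z₀ := by
  set R0 := A.resolvent z₀ with hR0
  have hg : DifferentiableAt ℂ (fun z => Ring.inverse (1 - (z - z₀) • R0) * R0) z₀ := by
    have h1 : DifferentiableAt ℂ (fun z : ℂ => 1 - (z - z₀) • R0) z₀ := by
      apply (differentiableAt_const _).sub
      exact (differentiableAt_id.sub_const z₀).smul_const R0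
    have h2 : DifferentiableAt ℂ Ring.inverse ((fun z : ℂ => 1 - (z - z₀) • R0) z₀) := by
      simp only [sub_self, zero_smul, sub_zero]
      exact differentiableAt_inverse isUnit_one
    exact (h2.comp z₀ h1).mul_const R0
  apply hg.congr_of_eventuallyEq
  have hball : ∀ z : ℂ, z ∈ Metric.ball z₀ (min |z₀.im| (‖R0‖ + 1)⁻¹) →
      A.resolvent z = Ring.inverse (1 - (z - z₀) • R0) * R0 := by
    intro z hzb
    rw [Metric.mem_ball, Complex.dist_eq, lt_min_iff] at hzb
    have hzim : z.im ≠ 0 := by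
      intro h0
      have : |z₀.im| ≤ ‖z - z₀‖ := by
        simpa [Complex.sub_im, h0] using Complex.abs_im_le_norm (z - z₀)
      linarith [hzb.1]
    have hnorm : ‖(z - z₀) • R0‖ < 1 := by
      have h1 : ‖(z - z₀) • R0‖ ≤ ‖z - z₀‖ * ‖R0‖ := by
        simpa using norm_smul_le (z - z₀) R0
      have h2 : ‖z - z₀‖ * ‖R0‖ < 1 := by
        have hpos : (0:ℝ) < ‖R0‖ + 1 := by positivity
        have hone : (‖R0‖ + 1)⁻¹ * (‖R0‖ + 1) = 1 := inv_mul_cancel₀ (ne_of_gt hpos)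
        nlinarith [hzb.2, norm_nonneg (z - z₀), norm_nonneg R0,
          mul_pos (sub_pos.2 hzb.2) hpos]
      linarith
    have hid : (1 - (z - z₀) • R0) * A.resolvent z = R0 := by
      have hfo := res_first_op A h hzim (w := z)
      rw [sub_eq_iff_eq_add] at hfo
      rw [sub_mul, one_mul, smul_mul_assoc, sub_eq_iff_eq_add]
      exact hfo.trans (add_comm _ _)
    have hu : IsUnit (1 - (z - z₀) • R0) := (Units.oneSub _ hnorm).isUnit
    obtain ⟨u, huu⟩ := hu
    rw [← huu, Ring.inverse_unit]
    rw [← huu] at hid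
    rw [← hid, ← mul_assoc, Units.inv_mul, one_mul]
  exact Filter.eventuallyEq_of_mem (Metric.ball_mem_nhds z₀ (by positivity)) hball

/-- Lemma 3.2 for `Φ`: under Hypothesis 3.1, `Φ(z) = J + K*(H₀-z)⁻¹K` is a Herglotz
operator, boundedly invertible for `z ∈ ℂ∖ℝ`, with
`Φ(z)⁻¹ = J - J K*(H-z)⁻¹K J` where `H = H₀ + KJK*`. -/
theorem phi_herglotz_and_inverse [SeparableSpace H]
    (H0 Hop : SelfAdjointOp H) (J K : H →L[ℂ] H)
    (hJ : IsSelfAdjoint J) (hJ2 : J * J = 1) (hK : IsHilbertSchmidt K)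
    (hsum : IsSumOf Hop H0 (K * J * ContinuousLinearMap.adjoint K)) :
    IsHerglotz (fun z => J + ContinuousLinearMap.adjoint K * H0.resolvent z * K) ∧
    ∀ z : ℂ, z.im ≠ 0 →
      IsUnit (J + ContinuousLinearMap.adjoint K * H0.resolvent z * K) ∧
      Ring.inverse (J + ContinuousLinearMap.adjoint K * H0.resolvent z * K) =
        J - J * (ContinuousLinearMap.adjoint K * Hop.resolvent z * K) * J := by
  have hJstar : star J = J := hJ
  constructor
  · constructor
    · intro z hz
      have hz' : z.im ≠ 0 := ne_of_gt hz
      exact ((differentiableAt_const J).add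
        (((res_differentiableAt H0 hz').const_mul
          (ContinuousLinearMap.adjoint K)).mul_const K)).differentiableWithinAt
    · intro z hz
      have hz' : z.im ≠ 0 := ne_of_gt hz
      have hzc : ((starRingEnd ℂ) z).im ≠ 0 := by simpa using neg_ne_zero.mpr hz'
      have hadj : ContinuousLinearMap.adjoint (H0.resolvent z)
          = H0.resolvent ((starRingEnd ℂ) z) := res_adjoint H0 hz'
      have hadj' : ContinuousLinearMap.adjoint (H0.resolvent ((starRingEnd ℂ) z))
          = H0.resolvent z := by
        rw [← hadj, ContinuousLinearMap.adjoint_adjoint]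
      have hstar : ContinuousLinearMap.adjoint
            (J + ContinuousLinearMap.adjoint K * H0.resolvent z * K)
          = J + ContinuousLinearMap.adjoint K * H0.resolvent ((starRingEnd ℂ) z) * K := by
        rw [← ContinuousLinearMap.star_eq_adjoint, star_add, star_mul, star_mul]
        simp only [ContinuousLinearMap.star_eq_adjoint, ContinuousLinearMap.adjoint_adjoint,
          hadj, hJstar]
        noncomm_ring
      have key : imPart (J + ContinuousLinearMap.adjoint K * H0.resolvent z * K)
          = ((z.im : ℝ) : ℂ) • (ContinuousLinearMap.adjoint K *
              (H0.resolvent ((starRingEnd ℂ) z) * H0.resolvent z) * K) := by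
        rw [imPart, hstar]
        have e1 : (J + ContinuousLinearMap.adjoint K * H0.resolvent z * K) -
              (J + ContinuousLinearMap.adjoint K * H0.resolvent ((starRingEnd ℂ) z) * K)
            = ContinuousLinearMap.adjoint K *
                (H0.resolvent z - H0.resolvent ((starRingEnd ℂ) z)) * K := by
          noncomm_ring
        rw [e1, res_first_op H0 hzc hz', Complex.sub_conj, mul_smul_comm, smul_mul_assoc,
          smul_smul]
        congr 1
        have hI := Complex.I_ne_zero
        push_cast
        field_simp
      rw [key]
      constructor
      · refine IsSelfAdjoint.isSymmetric ?_
        show star _ = _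
        rw [star_smul, star_mul, star_mul, star_mul]
        simp only [ContinuousLinearMap.star_eq_adjoint, ContinuousLinearMap.adjoint_adjoint,
          hadj, hadj', RCLike.star_def, Complex.conj_ofReal]
        noncomm_ring
      · intro x
        rw [ContinuousLinearMap.reApplyInnerSelf]
        simp only [ContinuousLinearMap.smul_apply, ContinuousLinearMap.mul_apply]
        rw [inner_smul_left, ← hadj, adjoint_inner_left, adjoint_inner_left,
          Complex.conj_ofReal]
        simp only [RCLike.re_to_complex, Complex.mul_re, Complex.ofReal_re, Complex.ofReal_im,
          zero_mul, sub_zero]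
        have h1 : (0:ℝ) ≤ (⟪(H0.resolvent z) (K x), (H0.resolvent z) (K x)⟫_ℂ).re := by
          have := inner_self_nonneg (𝕜 := ℂ) (x := (H0.resolvent z) (K x))
          rwa [RCLike.re_to_complex] at this
        exact mul_nonneg hz.le h1
  · intro z hz
    have eq1 : H0.resolvent z - Hop.resolvent z
        = H0.resolvent z * (K * J * ContinuousLinearMap.adjoint K) * Hop.resolvent z :=
      res_second_op H0 Hop hsum hz
    have eq2 : H0.resolvent z - Hop.resolvent z
        = Hop.resolvent z * (K * J * ContinuousLinearMap.adjoint K) * H0.resolvent z :=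
      res_second_op' H0 Hop hsum hz
    have hPhiPsi : (J + ContinuousLinearMap.adjoint K * H0.resolvent z * K) *
        (J - J * (ContinuousLinearMap.adjoint K * Hop.resolvent z * K) * J) = 1 := by
      have expand : (J + ContinuousLinearMap.adjoint K * H0.resolvent z * K) *
            (J - J * (ContinuousLinearMap.adjoint K * Hop.resolvent z * K) * J)
          = J * J - (J * J) * (ContinuousLinearMap.adjoint K * Hop.resolvent z * K) * J
            + ContinuousLinearMap.adjoint K * H0.resolvent z * K * J
            - ContinuousLinearMap.adjoint K *
                (H0.resolvent z * (K * J * ContinuousLinearMap.adjoint K) * Hop.resolvent z)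
                * K * J := by
        noncomm_ring
      rw [expand, hJ2, ← eq1]
      noncomm_ring
    have hPsiPhi : (J - J * (ContinuousLinearMap.adjoint K * Hop.resolvent z * K) * J) *
        (J + ContinuousLinearMap.adjoint K * H0.resolvent z * K) = 1 := by
      have expand : (J - J * (ContinuousLinearMap.adjoint K * Hop.resolvent z * K) * J) *
            (J + ContinuousLinearMap.adjoint K * H0.resolvent z * K)
          = J * J - J * (ContinuousLinearMap.adjoint K * Hop.resolvent z * K) * (J * J)
            + J * (ContinuousLinearMap.adjoint K * H0.resolvent z * K)
            - J * (ContinuousLinearMap.adjoint K *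
                (Hop.resolvent z * (K * J * ContinuousLinearMap.adjoint K) * H0.resolvent z)
                * K) := by
        noncomm_ring
      rw [expand, hJ2, ← eq2]
      noncomm_ring
    exact ⟨⟨⟨_, _, hPhiPsi, hPsiPhi⟩, rfl⟩, Ring.inverse_unit ⟨_, _, hPhiPsi, hPsiPhi⟩⟩


end SpectralShift
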